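/- Let M_r ∈ ℝ^{3×3} be a constant symmetric matrix and let R̃ : ℝ → SO(3) be differentiable with R̃' = R̃ [w_Ω − R̂ b̃_Ω]_× for functions w_Ω, b̃_Ω : ℝ → ℝ³ and R̂ : ℝ → SO(3). Then (d/dt) ‖M_r R̃‖_I = −½ vex(P_a(M_r R̃))ᵀ (R̂ b̃_Ω − w_Ω). -/

import Mathlib

open Matrix

attribute [local instance] Matrix.frobeniusNormedAddCommGroup Matrix.frobeniusNormedSpace

/-- The hat map `[y]ₓ`: the 3×3 skew-symmetric matrix with `[y]ₓ x = y × x`. -/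
def hat (y : Fin 3 → ℝ) : Matrix (Fin 3) (Fin 3) ℝ :=
  !![0, -y 2, y 1; y 2, 0, -y 0; -y 1, y 0, 0]

/-- `vex(𝒫ₐ(A)) = ½ [A₃₂ − A₂₃, A₁₃ − A₃₁, A₂₁ − A₁₂]ᵀ`. -/
noncomputable def vexPa (A : Matrix (Fin 3) (Fin 3) ℝ) : Fin 3 → ℝ :=
  ![(A 2 1 - A 1 2) / 2, (A 0 2 - A 2 0) / 2, (A 1 0 - A 0 1) / 2]

/-- `‖M R‖_I = ¼ Tr(M (I₃ − R))`. -/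
noncomputable def normI (M R : Matrix (Fin 3) (Fin 3) ℝ) : ℝ :=
  (M * (1 - R)).trace / 4

/-- for constant symmetric `M_r` and `R̃' = R̃ [w_Ω − R̂ b̃_Ω]ₓ`,
`(d/dt) ‖M_r R̃‖_I = −½ vex(𝒫ₐ(M_r R̃))ᵀ (R̂ b̃_Ω − w_Ω)`. -/
theorem normI_deriv (Mr : Matrix (Fin 3) (Fin 3) ℝ) (hMr : Mrᵀ = Mr)
    (Rtilde Rhat : ℝ → Matrix (Fin 3) (Fin 3) ℝ)
    (hRtildeSO : ∀ t, (Rtilde t)ᵀ * Rtilde t = 1 ∧ (Rtilde t).det = 1)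
    (hRhatSO : ∀ t, (Rhat t)ᵀ * Rhat t = 1 ∧ (Rhat t).det = 1)
    (wΩ btildeΩ : ℝ → Fin 3 → ℝ)
    (hRtilde : ∀ t, HasDerivAt Rtilde
      (Rtilde t * hat (wΩ t - (Rhat t).mulVec (btildeΩ t))) t) :
    ∀ t, HasDerivAt (fun s => normI Mr (Rtilde s))
      (-(2 : ℝ)⁻¹ *
        (vexPa (Mr * Rtilde t) ⬝ᵥ ((Rhat t).mulVec (btildeΩ t) - wΩ t))) t := by
  intro t
  set u : Fin 3 → ℝ := wΩ t - (Rhat t).mulVec (btildeΩ t) with hu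
  set D : Matrix (Fin 3) (Fin 3) ℝ := Rtilde t * hat u with hD
  have hf : HasDerivAt (fun s => (Mr * Rtilde s).trace) ((Mr * D).trace) t := by
    have hlin :
        HasFDerivAt (fun X : Matrix (Fin 3) (Fin 3) ℝ => (Mr * X).trace)
          (((Matrix.traceLinearMap (Fin 3) ℝ ℝ).comp
            (LinearMap.mulLeft ℝ Mr)).toContinuousLinearMap) (Rtilde t) :=
      ((Matrix.traceLinearMap (Fin 3) ℝ ℝ).comp
        (LinearMap.mulLeft ℝ Mr)).toContinuousLinearMap.hasFDerivAt
    have := hlin.comp_hasDerivAt t (hRtilde t)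
    exact this
  have h2 : HasDerivAt (fun s => normI Mr (Rtilde s)) (-((Mr * D).trace) / 4) t := by
    have h3 : HasDerivAt (fun s => (Mr.trace - (Mr * Rtilde s).trace) / 4)
        ((0 - (Mr * D).trace) / 4) t :=
      ((hasDerivAt_const t Mr.trace).sub hf).div_const 4
    have heq : (fun s => (Mr.trace - (Mr * Rtilde s).trace) / 4)
        = fun s => normI Mr (Rtilde s) := by
      funext s
      simp [normI, Matrix.mul_sub, Matrix.mul_one, trace_sub]
    rw [heq] at h3
    simpa using h3
  convert h2 using 1
  have : (Mr * D).trace = ((Mr * Rtilde t) * hat u).trace := by rw [hD, mul_assoc]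
  rw [this]
  set A := Mr * Rtilde t
  have hvec : (Rhat t).mulVec (btildeΩ t) - wΩ t = -u := by rw [hu]; abel
  rw [hvec]
  simp [trace, Matrix.mul_apply, Fin.sum_univ_three, hat, vexPa, dotProduct,
    Matrix.diag]
  ring
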